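/- Suppose T : S → ℝ satisfies the harmonicity condition Σ_{j=0}^{p_L-1} (T(L) - T(L_j)) = 0 for every non-minimal vertex L of a finite subtree S of regular type (equivalently Δ(μ(L)T(L)) = 0, using μ(L_j) = μ(L)/p_L). Then Δ(T(J) μ(J)^2)(J) = T(J) μ(J)^2 (1 - p_J^{-1}) for every J ∈ S \ S_min, and consequently Σ_{J ∈ S\S_min} T(J) μ(J)^2 (1 - p_J^{-1}) = T(K) μ(K)^2 - Σ_{J ∈ S_min} T(J) μ(J)^2, where K is the maximal vertex of S. -/

import Mathlib

open Finset

/-- Tree derivative: `ΔF(J) = F(J) - Σ_{children c of J} F(c)`. -/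
def treeDeriv {V : Type*} (children : V → Finset V) (F : V → ℝ) (J : V) : ℝ :=
  F J - ∑ c ∈ children J, F c

/-- A finite directed subtree `S` of regular type of a directed tree (vertices `V`,
partial order the tree order, `children J` = set of vertices covered by `J`),
with maximal vertex `K` and set of minimal vertices `Smin`. -/
structure RegularSubtree (V : Type*) [PartialOrder V] [DecidableEq V] (children : V → Finset V) where
  S : Finset V
  Smin : Finset V
  K : V
  smin_subset : Smin ⊆ S
  K_mem : K ∈ S
  K_top : ∀ J ∈ S, J ≤ K
  child_lt : ∀ J : V, ∀ c ∈ children J, c < J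
  /-- regularity: all children (in the ambient tree) of a non-minimal vertex of `S` lie in `S` -/
  regular : ∀ J ∈ S \ Smin, children J ⊆ S
  /-- minimal vertices of `S` have no children inside `S` -/
  min_no_child : ∀ J ∈ Smin, ∀ c ∈ children J, c ∉ S
  /-- every vertex of `S` other than `K` has a unique parent in `S \ Smin` -/
  parent : ∀ J ∈ S, J ≠ K → ∃! P : V, P ∈ S \ Smin ∧ J ∈ children P
  /-- `K` is not a child of any vertex of `S` -/
  K_not_child : ∀ J ∈ S, K ∉ children J

/-- if `T` is harmonic on `S` (`Σ_j (T(L) - T(L_j)) = 0` for every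
non-minimal `L`, equivalently `Δ(μT) = 0`), then
`Δ(Tμ²)(J) = T(J) μ(J)² (1 - p_J⁻¹)` for every `J ∈ S \ S_min`, and consequently
`Σ_{J ∈ S\S_min} T(J) μ(J)² (1 - p_J⁻¹) = T(K) μ(K)² - Σ_{J ∈ S_min} T(J) μ(J)²`. -/
theorem harmonic_T_functional {V : Type*} [PartialOrder V] [DecidableEq V]
    (children : V → Finset V)
    (R : RegularSubtree V children) (μ : V → ℝ) (T : V → ℝ)
    (hμpos : ∀ J, 0 < μ J)
    (hp : ∀ J ∈ R.S \ R.Smin, 1 ≤ (children J).card)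
    (hμ : ∀ J ∈ R.S \ R.Smin, ∀ c ∈ children J, μ c = μ J / ((children J).card : ℝ))
    (hharm : ∀ L ∈ R.S \ R.Smin, ∑ c ∈ children L, (T L - T c) = 0) :
    (∀ J ∈ R.S \ R.Smin,
        treeDeriv children (fun v => T v * μ v ^ 2) J
          = T J * μ J ^ 2 * (1 - ((children J).card : ℝ)⁻¹)) ∧
    ∑ J ∈ R.S \ R.Smin, T J * μ J ^ 2 * (1 - ((children J).card : ℝ)⁻¹)
      = T R.K * μ R.K ^ 2 - ∑ J ∈ R.Smin, T J * μ J ^ 2 := by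
  -- Part 1
  have part1 : ∀ J ∈ R.S \ R.Smin,
      treeDeriv children (fun v => T v * μ v ^ 2) J
        = T J * μ J ^ 2 * (1 - ((children J).card : ℝ)⁻¹) := by
    intro J hJ
    have hcard : (1 : ℕ) ≤ (children J).card := hp J hJ
    have hpne : ((children J).card : ℝ) ≠ 0 := by
      have : 0 < (children J).card := hcard
      exact_mod_cast this.ne'
    have hsum : ∑ c ∈ children J, T c = ((children J).card : ℝ) * T J := by
      have := hharm J hJ
      rw [Finset.sum_sub_distrib, Finset.sum_const, nsmul_eq_mul, sub_eq_zero] at this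
      linarith
    have : ∑ c ∈ children J, T c * μ c ^ 2
        = T J * μ J ^ 2 * ((children J).card : ℝ)⁻¹ := by
      have : ∑ c ∈ children J, T c * μ c ^ 2
          = ∑ c ∈ children J, T c * (μ J / ((children J).card : ℝ)) ^ 2 := by
        apply Finset.sum_congr rfl
        intro c hc
        rw [hμ J hJ c hc]
      rw [this, ← Finset.sum_mul, hsum]
      field_simp
    rw [treeDeriv, this]
    ring
  refine ⟨part1, ?_⟩
  -- key combinatorial lemma
  have key : ∀ F : V → ℝ,
      ∑ J ∈ R.S \ R.Smin, ∑ c ∈ children J, F c = ∑ v ∈ R.S.erase R.K, F v := by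
    intro F
    rw [← Finset.sum_biUnion]
    · apply Finset.sum_congr _ (fun _ _ => rfl)
      apply Finset.ext
      intro v
      simp only [Finset.mem_biUnion, Finset.mem_erase]
      constructor
      · rintro ⟨J, hJ, hv⟩
        refine ⟨fun h => R.K_not_child J (Finset.mem_sdiff.mp hJ).1 (h ▸ hv), R.regular J hJ hv⟩
      · rintro ⟨hne, hv⟩
        obtain ⟨P, hP, -⟩ := R.parent v hv hne
        exact ⟨P, hP.1, hP.2⟩
    · intro a ha b hb hab
      simp only [Finset.disjoint_left]
      intro c hca hcb
      have hcS : c ∈ R.S := R.regular a (by simpa using ha) hca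
      have hcne : c ≠ R.K := fun h => R.K_not_child a (Finset.mem_sdiff.mp (by simpa using ha)).1 (h ▸ hca)
      obtain ⟨P, hP, huniq⟩ := R.parent c hcS hcne
      exact hab (by rw [huniq a ⟨by simpa using ha, hca⟩, huniq b ⟨by simpa using hb, hcb⟩])
  have tele : ∑ J ∈ R.S \ R.Smin, treeDeriv children (fun v => T v * μ v ^ 2) J
      = T R.K * μ R.K ^ 2 - ∑ J ∈ R.Smin, T J * μ J ^ 2 := by
    simp only [treeDeriv, Finset.sum_sub_distrib]
    rw [key (fun v => T v * μ v ^ 2)]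
    have h1 : ∑ v ∈ R.S.erase R.K, T v * μ v ^ 2
        = ∑ v ∈ R.S, T v * μ v ^ 2 - T R.K * μ R.K ^ 2 :=
      Finset.sum_erase_eq_sub R.K_mem
    have h2 : ∑ v ∈ R.S \ R.Smin, T v * μ v ^ 2
        = ∑ v ∈ R.S, T v * μ v ^ 2 - ∑ v ∈ R.Smin, T v * μ v ^ 2 :=
      Finset.sum_sdiff_eq_sub R.smin_subset
    rw [h1, h2]; ring
  rw [← Finset.sum_congr rfl part1, tele]
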